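/- (Theorem 2, upper bounds: GHP upper bound is tighter than the Jensen–Shannon upper bound.) For m ≥ 3, the GHP upper bound on the Bayes error is dominated by the generalized Jensen–Shannon upper bound: 2 Σ_{1≤i<j≤m} δ^m_ij ≤ ε^m_JS. Consequently ε^m ≤ 2 Σ_{1≤i<j≤m} δ^m_ij ≤ ε^m_JS. -/

import Mathlib

section FrozenDefs
open MeasureTheory Finset

/-- The mixture density `f⁽ᵐ⁾(x) = ∑ₖ pₖ fₖ(x)`. -/
noncomputable def mixture {m d : ℕ} (p : Fin m → ℝ) (f : Fin m → (Fin d → ℝ) → ℝ)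
    (x : Fin d → ℝ) : ℝ :=
  ∑ k, p k * f k x

/-- The multi-class Bayes error rate `ε^m = 1 - ∫ max_k pₖ fₖ(x) dx`. -/
noncomputable def bayesError {m d : ℕ} (p : Fin m → ℝ) (f : Fin m → (Fin d → ℝ) → ℝ) : ℝ :=
  1 - ∫ x : Fin d → ℝ, ⨆ k, p k * f k x

/-- `δ^m_ij = ∫ pᵢ pⱼ fᵢ(x) fⱼ(x) / f⁽ᵐ⁾(x) dx` (integrand `0` where the denominator is `0`). -/
noncomputable def deltaGHP {m d : ℕ} (p : Fin m → ℝ) (f : Fin m → (Fin d → ℝ) → ℝ)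
    (i j : Fin m) : ℝ :=
  ∫ x : Fin d → ℝ, p i * p j * f i x * f j x / mixture p f x

/-- `δ_ij = ∫ pᵢ pⱼ fᵢ(x) fⱼ(x) / (pᵢ fᵢ(x) + pⱼ fⱼ(x)) dx`
(integrand `0` where the denominator is `0`). -/
noncomputable def deltaPW {m d : ℕ} (p : Fin m → ℝ) (f : Fin m → (Fin d → ℝ) → ℝ)
    (i j : Fin m) : ℝ :=
  ∫ x : Fin d → ℝ, p i * p j * f i x * f j x / (p i * f i x + p j * f j x)

/-- The generalized Jensen–Shannon upper bound on the Bayes error: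
`ε^m_JS = -(1/2) ∫ ∑ₖ pₖ fₖ(x) log₂(pₖ fₖ(x) / f⁽ᵐ⁾(x)) dx`, with the convention
`0 · log₂ 0 = 0`.  It equals `(1/2)(H(p) - JS_p(f₁,…,f_m))`. -/
noncomputable def epsJS {m d : ℕ} (p : Fin m → ℝ) (f : Fin m → (Fin d → ℝ) → ℝ) : ℝ :=
  -(1 / 2) * ∫ x : Fin d → ℝ,
    ∑ k, p k * f k x * Real.logb 2 (p k * f k x / mixture p f x)

end FrozenDefs

section AuxAnalytic
open Real Set


noncomputable def Dfun (y : ℝ) : ℝ :=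
  2 * Real.log 2 * y ^ 2 - (1 + y) * Real.log (1 + y) - (1 - y) * Real.log (1 - y)

noncomputable def Dfun' (y : ℝ) : ℝ :=
  4 * Real.log 2 * y - Real.log (1 + y) + Real.log (1 - y)

noncomputable def Dfun'' (y : ℝ) : ℝ := 4 * Real.log 2 - 1 / (1 + y) - 1 / (1 - y)

lemma contD : Continuous Dfun := by
  unfold Dfun
  have h1 : Continuous fun y : ℝ => (1 + y) * Real.log (1 + y) :=
    Real.continuous_mul_log.comp (by continuity)
  have h2 : Continuous fun y : ℝ => (1 - y) * Real.log (1 - y) :=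
    Real.continuous_mul_log.comp (by continuity)
  continuity

lemma hasDerivD {y : ℝ} (h1 : -1 < y) (h2 : y < 1) : HasDerivAt Dfun (Dfun' y) y := by
  have e1 : (1:ℝ) + y ≠ 0 := by linarith
  have e2 : (1:ℝ) - y ≠ 0 := by linarith
  have d1 : HasDerivAt (fun y : ℝ => (1 + y) * Real.log (1 + y))
      (Real.log (1 + y) + 1) y := by
    have := (Real.hasDerivAt_mul_log e1).comp y ((hasDerivAt_id y).const_add 1)
    simpa [Function.comp_def] using this
  have d2 : HasDerivAt (fun y : ℝ => (1 - y) * Real.log (1 - y))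
      (-(Real.log (1 - y) + 1)) y := by
    have := (Real.hasDerivAt_mul_log e2).comp y ((hasDerivAt_id y).neg.const_add 1)
    simpa [mul_comm, Function.comp_def] using this
  have d0 : HasDerivAt (fun y : ℝ => 2 * Real.log 2 * y ^ 2) (4 * Real.log 2 * y) y := by
    have := (hasDerivAt_pow 2 y).const_mul (2 * Real.log 2)
    exact this.congr_deriv (by norm_num; ring)
  have := (d0.sub d1).sub d2
  exact this.congr_deriv (by unfold Dfun'; ring)

lemma hasDerivD' {y : ℝ} (h1 : -1 < y) (h2 : y < 1) : HasDerivAt Dfun' (Dfun'' y) y := by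
  have e1 : (1:ℝ) + y ≠ 0 := by linarith
  have e2 : (1:ℝ) - y ≠ 0 := by linarith
  have d1 : HasDerivAt (fun y : ℝ => Real.log (1 + y)) (1 / (1 + y)) y := by
    have := (Real.hasDerivAt_log e1).comp y ((hasDerivAt_id y).const_add 1)
    simpa [one_div, Function.comp_def] using this
  have d2 : HasDerivAt (fun y : ℝ => Real.log (1 - y)) (-(1 / (1 - y))) y := by
    have := (Real.hasDerivAt_log e2).comp y ((hasDerivAt_id y).neg.const_add 1)
    simpa [one_div, Function.comp_def] using this
  have d0 : HasDerivAt (fun y : ℝ => 4 * Real.log 2 * y) (4 * Real.log 2) y := by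
    simpa using (hasDerivAt_id y).const_mul (4 * Real.log 2)
  have h := (d0.sub d1).add d2
  have e : Dfun'' y = 4 * Real.log 2 - 1 / (1 + y) + -(1 / (1 - y)) := by
    unfold Dfun''; ring
  rw [e]; exact h

-- constants
noncomputable def ccon : ℝ := Real.sqrt (1 - 1 / (2 * Real.log 2))

lemma log2_gt : (0.6931471803 : ℝ) < Real.log 2 := Real.log_two_gt_d9
lemma log2_lt : Real.log 2 < 0.6931471808 := Real.log_two_lt_d9

lemma csq : ccon ^ 2 = 1 - 1 / (2 * Real.log 2) := by
  have h : (0:ℝ) ≤ 1 - 1 / (2 * Real.log 2) := by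
    have := log2_gt
    have h2 : (1:ℝ) / (2 * Real.log 2) ≤ 1 := by
      rw [div_le_one (by linarith)]
      linarith
    linarith
  rw [ccon, sq_sqrt h]

lemma ccon_nonneg : 0 ≤ ccon := Real.sqrt_nonneg _

lemma ccon_lt_one : ccon < 1 := by
  have h := log2_gt
  have : ccon ^ 2 < 1 := by
    rw [csq]
    have : 0 < 1 / (2 * Real.log 2) := by positivity
    linarith
  nlinarith [ccon_nonneg]
-- D'' sign
lemma Dpp_nonneg {y : ℝ} (h0 : 0 < y) (hc : y < ccon) : 0 ≤ Dfun'' y := by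
  have hL := log2_gt
  have hy1 : y < 1 := lt_trans hc ccon_lt_one
  have h1 : (0:ℝ) < 1 + y := by linarith
  have h2 : (0:ℝ) < 1 - y := by linarith
  have hyc : y ^ 2 < ccon ^ 2 := by nlinarith [ccon_nonneg]
  rw [csq] at hyc
  -- 1 - y^2 > 1/(2 log 2)
  have key : 1 / (2 * Real.log 2) < 1 - y ^ 2 := by linarith
  have hpos : (0:ℝ) < 1 - y ^ 2 := by nlinarith
  -- 1/(1+y) + 1/(1-y) = 2/(1-y^2) ≤ 4 log 2
  have e : 1 / (1 + y) + 1 / (1 - y) = 2 / (1 - y ^ 2) := by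
    field_simp
    ring
  have h4 : 2 / (1 - y ^ 2) ≤ 4 * Real.log 2 := by
    rw [div_le_iff₀ hpos]
    have := (div_lt_iff₀ (by linarith : (0:ℝ) < 2 * Real.log 2)).mp key
    nlinarith
  unfold Dfun''
  linarith [e ▸ h4]

lemma Dpp_nonpos {y : ℝ} (hc : ccon < y) (hy : y < 1) : Dfun'' y ≤ 0 := by
  have hL := log2_gt
  have h0 : 0 < y := lt_of_le_of_lt ccon_nonneg hc
  have h1 : (0:ℝ) < 1 + y := by linarith
  have h2 : (0:ℝ) < 1 - y := by linarith
  have hyc : ccon ^ 2 < y ^ 2 := by nlinarith [ccon_nonneg]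
  rw [csq] at hyc
  have hpos : (0:ℝ) < 1 - y ^ 2 := by nlinarith
  have key : 1 - y ^ 2 < 1 / (2 * Real.log 2) := by linarith
  have e : 1 / (1 + y) + 1 / (1 - y) = 2 / (1 - y ^ 2) := by
    field_simp
    ring
  have h4 : 4 * Real.log 2 ≤ 2 / (1 - y ^ 2) := by
    rw [le_div_iff₀ hpos]
    have := (lt_div_iff₀ (by linarith : (0:ℝ) < 2 * Real.log 2)).mp key
    nlinarith
  unfold Dfun''
  linarith [e ▸ h4]
lemma contD'_on : ContinuousOn Dfun' (Icc 0 ccon) := by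
  have h1 : ContinuousOn (fun y : ℝ => Real.log (1 + y)) (Icc 0 ccon) := by
    apply ContinuousOn.log (by fun_prop)
    intro x hx
    have := hx.1
    intro h; linarith
  have h2 : ContinuousOn (fun y : ℝ => Real.log (1 - y)) (Icc 0 ccon) := by
    apply ContinuousOn.log (by fun_prop)
    intro x hx
    have h1 := hx.2
    have := ccon_lt_one
    intro h; linarith
  unfold Dfun'
  fun_prop

lemma D'_nonneg_on {y : ℝ} (hy : y ∈ Icc 0 ccon) : 0 ≤ Dfun' y := by
  have hmono : MonotoneOn Dfun' (Icc 0 ccon) := by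
    apply monotoneOn_of_hasDerivWithinAt_nonneg (convex_Icc _ _) contD'_on
      (f' := Dfun'')
    · intro x hx
      rw [interior_Icc] at hx
      have hx1 : 0 < x := hx.1
      have hx2 : x < ccon := hx.2
      exact (hasDerivD' (by linarith) (by linarith [ccon_lt_one])).hasDerivWithinAt
    · intro x hx
      rw [interior_Icc] at hx
      exact Dpp_nonneg hx.1 hx.2
  have h0 : Dfun' 0 = 0 := by
    unfold Dfun'
    norm_num
  have := hmono (left_mem_Icc.mpr ccon_nonneg) hy hy.1
  linarith [h0 ▸ this]

lemma D_nonneg_left {y : ℝ} (hy : y ∈ Icc 0 ccon) : 0 ≤ Dfun y := by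
  have hmono : MonotoneOn Dfun (Icc 0 ccon) := by
    apply monotoneOn_of_hasDerivWithinAt_nonneg (convex_Icc _ _) contD.continuousOn
      (f' := Dfun')
    · intro x hx
      rw [interior_Icc] at hx
      exact (hasDerivD (by linarith [hx.1]) (by linarith [hx.2, ccon_lt_one])).hasDerivWithinAt
    · intro x hx
      rw [interior_Icc] at hx
      exact D'_nonneg_on ⟨hx.1.le, hx.2.le⟩
  have h0 : Dfun 0 = 0 := by
    unfold Dfun
    norm_num
  have := hmono (left_mem_Icc.mpr ccon_nonneg) hy hy.1
  linarith [h0 ▸ this]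

lemma D_one : Dfun 1 = 0 := by
  unfold Dfun
  norm_num

lemma D_nonneg_right {y : ℝ} (hy : y ∈ Icc ccon 1) : 0 ≤ Dfun y := by
  have hconc : ConcaveOn ℝ (Icc ccon 1) Dfun := by
    apply concaveOn_of_hasDerivWithinAt2_nonpos (convex_Icc _ _) contD.continuousOn
      (f' := Dfun') (f'' := Dfun'')
    · intro x hx
      rw [interior_Icc] at hx
      exact (hasDerivD (by linarith [hx.1, ccon_nonneg]) hx.2).hasDerivWithinAt
    · intro x hx
      rw [interior_Icc] at hx
      exact (hasDerivD' (by linarith [hx.1, ccon_nonneg]) hx.2).hasDerivWithinAt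
    · intro x hx
      rw [interior_Icc] at hx
      exact Dpp_nonpos hx.1 hx.2
  have hmin := hconc.min_le_of_mem_Icc (left_mem_Icc.mpr ccon_lt_one.le)
    (right_mem_Icc.mpr ccon_lt_one.le) hy
  have hc0 : 0 ≤ Dfun ccon := D_nonneg_left (right_mem_Icc.mpr ccon_nonneg)
  rw [D_one] at hmin
  rw [min_eq_right hc0] at hmin
  exact hmin

lemma D_nonneg {y : ℝ} (h0 : 0 ≤ y) (h1 : y ≤ 1) : 0 ≤ Dfun y := by
  rcases le_total y ccon with h | h
  · exact D_nonneg_left ⟨h0, h⟩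
  · exact D_nonneg_right ⟨h, h1⟩
lemma phi_nonneg {t : ℝ} (h0 : 0 < t) (h2 : t ≤ 1/2) :
    2 * Real.log 2 * (1 - t) ≤ -Real.log t := by
  have h := Real.log_le_sub_one_of_pos (show (0:ℝ) < 2 * t by linarith)
  rw [Real.log_mul (by norm_num) h0.ne'] at h
  nlinarith [log2_lt]

lemma phi_anti {u v : ℝ} (hu : 0 < u) (huv : u ≤ v) (hv : v ≤ 1/2) :
    -Real.log v - 2 * Real.log 2 * (1 - v) ≤ -Real.log u - 2 * Real.log 2 * (1 - u) := by
  have hv0 : 0 < v := lt_of_lt_of_le hu huv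
  have hlog : Real.log (u / v) ≤ u / v - 1 := Real.log_le_sub_one_of_pos (by positivity)
  rw [Real.log_div hu.ne' hv0.ne'] at hlog
  have e : u / v - 1 = -((v - u) / v) := by field_simp; ring
  rw [e] at hlog
  have h2 : 2 * (v - u) ≤ (v - u) / v := by
    rw [le_div_iff₀ hv0]
    nlinarith
  nlinarith [log2_lt, log2_gt]

lemma gsum {M : ℝ} (h1 : 1/2 < M) (h2 : M < 1) :
    0 ≤ (-(M * Real.log M) - 2 * Real.log 2 * (M * (1 - M))) +
      (-((1 - M) * Real.log (1 - M)) - 2 * Real.log 2 * ((1 - M) * (1 - (1 - M)))) := by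
  have hD := D_nonneg (y := 2 * M - 1) (by linarith) (by linarith)
  unfold Dfun at hD
  have e1 : (1 + (2 * M - 1)) = 2 * M := by ring
  have e2 : (1 - (2 * M - 1)) = 2 * (1 - M) := by ring
  rw [e1, e2] at hD
  rw [Real.log_mul (by norm_num) (by linarith), Real.log_mul (by norm_num) (by linarith)] at hD
  nlinarith [hD]

lemma entropy_ge_gini {m : ℕ} (hm : 0 < m) (t : Fin m → ℝ) (ht : ∀ k, 0 ≤ t k)
    (h1 : ∑ k, t k = 1) :
    2 * Real.log 2 * ∑ k, t k * (1 - t k) ≤ -∑ k, t k * Real.log (t k) := by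
  have : Nonempty (Fin m) := ⟨⟨0, hm⟩⟩
  set L := Real.log 2 with hL
  set g : ℝ → ℝ := fun s => -(s * Real.log s) - 2 * L * (s * (1 - s)) with hg
  suffices hsum : 0 ≤ ∑ k, g (t k) by
    have e : ∑ k, g (t k) = -∑ k, t k * Real.log (t k) - 2 * L * ∑ k, t k * (1 - t k) := by
      rw [Finset.mul_sum, ← Finset.sum_neg_distrib, ← Finset.sum_sub_distrib]
    rw [e] at hsum
    linarith
  -- termwise nonneg lemma for small values
  have hterm : ∀ s : ℝ, 0 ≤ s → s ≤ 1/2 → 0 ≤ g s := by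
    intro s hs0 hs
    rcases eq_or_lt_of_le hs0 with h | h
    · simp [hg, ← h]
    · have := phi_nonneg h hs
      have : 0 ≤ -Real.log s - 2 * L * (1 - s) := by linarith
      have := mul_nonneg hs0 this
      simp only [hg]
      nlinarith
  obtain ⟨i₀, -, hmax⟩ := Finset.exists_max_image Finset.univ t ⟨⟨0, hm⟩, Finset.mem_univ _⟩
  set M := t i₀ with hM
  have hmax' : ∀ k, t k ≤ M := fun k => hmax k (Finset.mem_univ k)
  have hsplit : ∑ k ∈ Finset.univ.erase i₀, t k = 1 - M := by
    have := Finset.sum_erase_add Finset.univ t (Finset.mem_univ i₀)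
    rw [h1] at this
    linarith [this]
  have hrest : ∀ k, k ≠ i₀ → t k ≤ 1 - M := by
    intro k hk
    rw [← hsplit]
    exact Finset.single_le_sum (fun j _ => ht j) (Finset.mem_erase.mpr ⟨hk, Finset.mem_univ k⟩)
  have hM1 : M ≤ 1 := by
    rw [← h1]
    exact Finset.single_le_sum (fun j _ => ht j) (Finset.mem_univ i₀)
  rcases le_or_gt M (1/2) with hc | hc
  · exact Finset.sum_nonneg fun k _ => hterm (t k) (ht k) (le_trans (hmax' k) hc)
  · -- big max case
    rw [← Finset.sum_erase_add Finset.univ _ (Finset.mem_univ i₀)]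
    rcases eq_or_lt_of_le hM1 with hM1e | hMlt
    · -- M = 1 : all others are zero
      have hz : ∀ k ∈ Finset.univ.erase i₀, t k = 0 := by
        intro k hk
        have h0 : ∑ k ∈ Finset.univ.erase i₀, t k = 0 := by rw [hsplit, ← hM1e]; ring
        have := (Finset.sum_eq_zero_iff_of_nonneg (fun j _ => ht j)).mp h0 k hk
        exact this
      have e0 : ∑ k ∈ Finset.univ.erase i₀, g (t k) = 0 :=
        Finset.sum_eq_zero fun k hk => by simp [hg, hz k hk]
      have e1 : t i₀ = 1 := hM1e
      rw [e0, e1]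
      simp [hg]
    · -- 1/2 < M < 1
      have hMpos : (0:ℝ) < 1 - M := by linarith
      have hbound : ∀ k ∈ Finset.univ.erase i₀,
          t k * (-Real.log (1 - M) - 2 * L * (1 - (1 - M))) ≤ g (t k) := by
        intro k hk
        have hk' := (Finset.mem_erase.mp hk).1
        rcases eq_or_lt_of_le (ht k) with h | h
        · simp [hg, ← h]
        · have hphi := phi_anti h (hrest k hk') (by linarith)
          have := mul_le_mul_of_nonneg_left hphi (ht k)
          simp only [hg]
          nlinarith
      have hsum2 : (1 - M) * (-Real.log (1 - M) - 2 * L * (1 - (1 - M))) ≤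
          ∑ k ∈ Finset.univ.erase i₀, g (t k) := by
        calc (1 - M) * (-Real.log (1 - M) - 2 * L * (1 - (1 - M)))
            = ∑ k ∈ Finset.univ.erase i₀, t k * (-Real.log (1 - M) - 2 * L * (1 - (1 - M))) := by
              rw [← Finset.sum_mul, hsplit]
          _ ≤ _ := Finset.sum_le_sum hbound
      have hbin := gsum hc hMlt
      have eg : g M = -(M * Real.log M) - 2 * L * (M * (1 - M)) := rfl
      have eg2 : (1 - M) * (-Real.log (1 - M) - 2 * L * (1 - (1 - M))) =
          -((1 - M) * Real.log (1 - M)) - 2 * L * ((1 - M) * (1 - (1 - M))) := by ring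
      rw [eg2] at hsum2
      rw [eg]
      linarith
lemma sq_sum_identity {m : ℕ} (a : Fin m → ℝ) :
    (∑ k, a k) ^ 2 = ∑ k, a k ^ 2 +
      2 * ∑ i, ∑ j, (if i < j then a i * a j else 0) := by
  have e : (∑ k, a k) ^ 2 = ∑ i, ∑ j, a i * a j := by
    rw [sq, Finset.sum_mul_sum]
  have split : ∀ i j : Fin m, a i * a j =
      (if i < j then a i * a j else 0) + (if j < i then a i * a j else 0) +
        (if i = j then a i * a j else 0) := by
    intro i j
    rcases lt_trichotomy i j with h | h | h
    · simp [h, not_lt_of_gt h, h.ne]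
    · simp [h, lt_irrefl]
    · simp [h, not_lt_of_gt h, h.ne']
  have e2 : ∑ i, ∑ j, a i * a j =
      (∑ i, ∑ j, (if i < j then a i * a j else 0)) +
      (∑ i, ∑ j, (if j < i then a i * a j else 0)) +
      (∑ i, ∑ j, (if i = j then a i * a j else 0)) := by
    rw [← Finset.sum_add_distrib, ← Finset.sum_add_distrib]
    apply Finset.sum_congr rfl
    intro i _
    rw [← Finset.sum_add_distrib, ← Finset.sum_add_distrib]
    exact Finset.sum_congr rfl fun j _ => split i j
  have e3 : (∑ i, ∑ j, (if j < i then a i * a j else 0)) =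
      ∑ i, ∑ j, (if i < j then a i * a j else 0) := by
    rw [Finset.sum_comm]
    apply Finset.sum_congr rfl; intro i _
    apply Finset.sum_congr rfl; intro j _
    rcases lt_or_ge i j with h | h
    · simp [h, mul_comm]
    · rw [if_neg (not_lt_of_ge h)]
      rcases eq_or_lt_of_le h with he | hl
      · simp [he]
      · rw [if_neg (not_lt_of_gt hl)]
  have e4 : (∑ i, ∑ j, (if i = j then a i * a j else 0)) = ∑ k, a k ^ 2 := by
    apply Finset.sum_congr rfl; intro i _
    rw [Finset.sum_ite_eq (Finset.univ) i (fun j => a i * a j)]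
    simp [sq]
  rw [e, e2, e3, e4]
  ring
-- pointwise GHP lemma
lemma pointwise_GHP {m : ℕ} (hm : 0 < m) (a : Fin m → ℝ) (ha : ∀ k, 0 ≤ a k) :
    (∑ k, a k) - (⨆ k, a k) ≤
      2 * ∑ i, ∑ j, (if i < j then a i * a j / (∑ k, a k) else 0) := by
  have : Nonempty (Fin m) := ⟨⟨0, hm⟩⟩
  set s := ∑ k, a k with hs
  have hs0 : 0 ≤ s := Finset.sum_nonneg fun k _ => ha k
  rcases eq_or_lt_of_le hs0 with h0 | hpos
  · -- s = 0 : every a k = 0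
    have hz : ∀ k, a k = 0 := by
      intro k
      exact (Finset.sum_eq_zero_iff_of_nonneg (fun j _ => ha j)).mp h0.symm k (Finset.mem_univ k)
    have hsup : (⨆ k, a k) = 0 := by
      rw [show a = fun _ => (0:ℝ) from funext hz]
      exact ciSup_const
    have hrhs : (0:ℝ) ≤ 2 * ∑ i, ∑ j, (if i < j then a i * a j / s else 0) := by
      apply mul_nonneg (by norm_num)
      apply Finset.sum_nonneg; intro i _
      apply Finset.sum_nonneg; intro j _
      split_ifs
      · exact div_nonneg (mul_nonneg (ha i) (ha j)) hs0
      · exact le_refl _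
    rw [hsup, ← h0]
    simpa using hrhs
  · have hbdd : BddAbove (Set.range a) := Set.Finite.bddAbove (Set.finite_range a)
    have hle : ∀ k, a k ≤ ⨆ k, a k := fun k => le_ciSup hbdd k
    have hsup_nn : 0 ≤ ⨆ k, a k := le_trans (ha ⟨0, hm⟩) (hle ⟨0, hm⟩)
    -- rewrite RHS
    have e1 : (2 : ℝ) * ∑ i, ∑ j, (if i < j then a i * a j / s else 0)
        = (s ^ 2 - ∑ k, a k ^ 2) / s := by
      have : ∀ i : Fin m, ∑ j, (if i < j then a i * a j / s else 0)
          = (∑ j, (if i < j then a i * a j else 0)) / s := by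
        intro i
        rw [Finset.sum_div]
        apply Finset.sum_congr rfl
        intro j _
        split_ifs <;> simp
      rw [Finset.sum_congr rfl fun i _ => this i, ← Finset.sum_div]
      have := sq_sum_identity a
      rw [← hs] at this
      field_simp
      linarith [this]
    rw [e1]
    have key : ∑ k, a k ^ 2 ≤ s * (⨆ k, a k) := by
      calc ∑ k, a k ^ 2 ≤ ∑ k, a k * (⨆ k, a k) := by
            apply Finset.sum_le_sum
            intro k _
            rw [sq]
            exact mul_le_mul_of_nonneg_left (hle k) (ha k)
        _ = s * (⨆ k, a k) := by rw [← Finset.sum_mul]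
    rw [le_div_iff₀ hpos]
    nlinarith [key]
lemma pointwise_JS {m : ℕ} (hm : 0 < m) (a : Fin m → ℝ) (ha : ∀ k, 0 ≤ a k) :
    2 * ∑ i, ∑ j, (if i < j then a i * a j / (∑ k, a k) else 0) ≤
      -(1/2) * ∑ k, a k * Real.logb 2 (a k / (∑ k, a k)) := by
  have : Nonempty (Fin m) := ⟨⟨0, hm⟩⟩
  have hL : (0:ℝ) < Real.log 2 := by linarith [log2_gt]
  set s := ∑ k, a k with hs
  have hs0 : 0 ≤ s := Finset.sum_nonneg fun k _ => ha k
  rcases eq_or_lt_of_le hs0 with h0 | hpos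
  · have hz : ∀ k, a k = 0 := by
      intro k
      exact (Finset.sum_eq_zero_iff_of_nonneg (fun j _ => ha j)).mp h0.symm k (Finset.mem_univ k)
    have eL : ∑ i, ∑ j, (if i < j then a i * a j / s else 0) = 0 :=
      Finset.sum_eq_zero fun i _ => Finset.sum_eq_zero fun j _ => by
        simp [hz i, hz j]
    have eR : ∑ k, a k * Real.logb 2 (a k / s) = 0 :=
      Finset.sum_eq_zero fun k _ => by simp [hz k]
    rw [eL, eR]
    norm_num
  · set t : Fin m → ℝ := fun k => a k / s with ht
    have ht0 : ∀ k, 0 ≤ t k := fun k => div_nonneg (ha k) hs0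
    have ht1 : ∑ k, t k = 1 := by
      rw [ht, ← Finset.sum_div, ← hs, div_self hpos.ne']
    have key := entropy_ge_gini hm t ht0 ht1
    -- LHS = s * ∑ t (1 - t)
    have e1 : (2 : ℝ) * ∑ i, ∑ j, (if i < j then a i * a j / s else 0)
        = (s ^ 2 - ∑ k, a k ^ 2) / s := by
      have h' : ∀ i : Fin m, ∑ j, (if i < j then a i * a j / s else 0)
          = (∑ j, (if i < j then a i * a j else 0)) / s := by
        intro i
        rw [Finset.sum_div]
        apply Finset.sum_congr rfl
        intro j _
        split_ifs <;> simp
      rw [Finset.sum_congr rfl fun i _ => h' i, ← Finset.sum_div]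
      have := sq_sum_identity a
      rw [← hs] at this
      field_simp
      linarith [this]
    have e2 : (s ^ 2 - ∑ k, a k ^ 2) / s = s * ∑ k, t k * (1 - t k) := by
      have : ∀ k : Fin m, t k * (1 - t k) = a k / s - a k ^ 2 / s ^ 2 := by
        intro k
        rw [ht]
        field_simp
      rw [Finset.sum_congr rfl fun k _ => this k, Finset.sum_sub_distrib,
        ← Finset.sum_div, ← Finset.sum_div, ← hs]
      field_simp
    -- RHS = (s / (2 L)) * (-∑ t log t)
    have e3 : -(1/2) * ∑ k, a k * Real.logb 2 (a k / s)
        = (s / (2 * Real.log 2)) * (-∑ k, t k * Real.log (t k)) := by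
      have h' : ∀ k : Fin m, a k * Real.logb 2 (a k / s) = (s / Real.log 2) * (t k * Real.log (t k)) := by
        intro k
        rw [Real.logb, ht]
        field_simp
      rw [Finset.sum_congr rfl fun k _ => h' k, ← Finset.mul_sum]
      ring
    rw [e1, e2, e3]
    have hfac : (0:ℝ) ≤ s / (2 * Real.log 2) := by positivity
    calc s * ∑ k, t k * (1 - t k)
        = (s / (2 * Real.log 2)) * (2 * Real.log 2 * ∑ k, t k * (1 - t k)) := by
          field_simp
      _ ≤ (s / (2 * Real.log 2)) * (-∑ k, t k * Real.log (t k)) :=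
          mul_le_mul_of_nonneg_left key hfac

end AuxAnalytic

section AuxBound
-- helper: |a * logb 2 (a/s)| ≤ s / log 2  for 0 ≤ a ≤ s
lemma term_bound {a s : ℝ} (ha : 0 ≤ a) (has : a ≤ s) :
    |a * Real.logb 2 (a / s)| ≤ s / Real.log 2 := by
  have hL : (0:ℝ) < Real.log 2 := by linarith [log2_gt]
  have hs : 0 ≤ s := le_trans ha has
  rcases eq_or_lt_of_le ha with h0 | hapos
  · rw [← h0]
    simp
    positivity
  · have hspos : 0 < s := lt_of_lt_of_le hapos has
    have hds : a / s ≤ 1 := (div_le_one hspos).mpr has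
    have hdpos : 0 < a / s := div_pos hapos hspos
    have hlogle : Real.log (a / s) ≤ 0 := Real.log_nonpos hdpos.le hds
    have hterm : a * Real.logb 2 (a / s) ≤ 0 := by
      rw [Real.logb]
      apply mul_nonpos_of_nonneg_of_nonpos ha
      exact div_nonpos_of_nonpos_of_nonneg hlogle hL.le
    rw [abs_of_nonpos hterm]
    rw [Real.logb]
    have key : -Real.log (a / s) ≤ s / a - 1 := by
      have h1 : Real.log (s / a) ≤ s / a - 1 :=
        Real.log_le_sub_one_of_pos (div_pos hspos hapos)
      have h2 : Real.log (s / a) = -Real.log (a / s) := by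
        rw [Real.log_div hspos.ne' hapos.ne', Real.log_div hapos.ne' hspos.ne']
        ring
      linarith [h2 ▸ h1]
    have e : -(a * (Real.log (a / s) / Real.log 2)) = a * (-Real.log (a / s)) / Real.log 2 := by
      ring
    rw [e]
    rw [div_le_div_iff_of_pos_right hL]
    calc a * -Real.log (a / s) ≤ a * (s / a - 1) :=
          mul_le_mul_of_nonneg_left key ha
      _ = s - a := by field_simp
      _ ≤ s := by linarith


end AuxBound


open MeasureTheory Finset

theorem GHP_upper_tighter_than_JS_upper
    (m d : ℕ) (hm : 3 ≤ m) (hd : 1 ≤ d)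
    (p : Fin m → ℝ) (hp : ∀ k, 0 < p k) (hp1 : ∑ k, p k = 1)
    (f : Fin m → (Fin d → ℝ) → ℝ)
    (hfmeas : ∀ k, Measurable (f k))
    (hfnn : ∀ k x, 0 ≤ f k x)
    (hfint : ∀ k, ∫ x : Fin d → ℝ, f k x = 1) :
    bayesError p f ≤
        2 * ∑ i : Fin m, ∑ j : Fin m, (if i < j then deltaGHP p f i j else 0) ∧
      2 * ∑ i : Fin m, ∑ j : Fin m, (if i < j then deltaGHP p f i j else 0) ≤
        epsJS p f := by
  have hm0 : 0 < m := by omega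
  have hne : Nonempty (Fin m) := ⟨⟨0, hm0⟩⟩
  have hL : (0:ℝ) < Real.log 2 := by linarith [log2_gt]
  -- integrability of the densities
  have hfInt : ∀ k, Integrable (f k) := by
    intro k
    by_contra h
    have h1 := hfint k
    rw [integral_undef h] at h1
    norm_num at h1
  have haInt : ∀ k, Integrable (fun x => p k * f k x) := fun k => (hfInt k).const_mul _
  have haMeas : ∀ k, Measurable (fun x => p k * f k x) := fun k => (hfmeas k).const_mul _
  have hann : ∀ k x, 0 ≤ p k * f k x := fun k x => mul_nonneg (hp k).le (hfnn k x)
  have hmixeq : mixture p f = fun x => ∑ k, p k * f k x := rfl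
  have hmixMeas : Measurable (mixture p f) := by
    rw [hmixeq]
    exact Finset.measurable_sum _ fun k _ => haMeas k
  have hmixInt : Integrable (mixture p f) := by
    rw [hmixeq]
    exact integrable_finset_sum _ fun k _ => haInt k
  have hmixnn : ∀ x, 0 ≤ mixture p f x := fun x => Finset.sum_nonneg fun k _ => hann k x
  have ha_le_mix : ∀ k x, p k * f k x ≤ mixture p f x := fun k x =>
    Finset.single_le_sum (fun j _ => hann j x) (Finset.mem_univ k)
  have hmixint1 : ∫ x : Fin d → ℝ, mixture p f x = 1 := by
    rw [hmixeq, integral_finset_sum _ fun k _ => haInt k]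
    calc ∑ k : Fin m, ∫ x : Fin d → ℝ, p k * f k x
        = ∑ k : Fin m, p k * ∫ x : Fin d → ℝ, f k x := by
          exact Finset.sum_congr rfl fun k _ => integral_const_mul _ _
      _ = ∑ k : Fin m, p k := by
          exact Finset.sum_congr rfl fun k _ => by rw [hfint k, mul_one]
      _ = 1 := hp1
  -- the sup function
  set g : (Fin d → ℝ) → ℝ := fun x => ⨆ k, p k * f k x with hgdef
  have hgMeas : Measurable g := Measurable.iSup fun k => haMeas k
  have hg_le : ∀ x, g x ≤ mixture p f x := fun x => ciSup_le fun k => ha_le_mix k x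
  have hg_nn : ∀ x, 0 ≤ g x := by
    intro x
    refine le_trans (hann ⟨0, hm0⟩ x) ?_
    exact le_ciSup (Set.Finite.bddAbove (Set.finite_range fun k => p k * f k x)) ⟨0, hm0⟩
  have hgInt : Integrable g := by
    apply hmixInt.mono hgMeas.aestronglyMeasurable
    filter_upwards with x
    rw [Real.norm_eq_abs, Real.norm_eq_abs, abs_of_nonneg (hg_nn x), abs_of_nonneg (hmixnn x)]
    exact hg_le x
  -- GHP integrands
  set G : Fin m → Fin m → (Fin d → ℝ) → ℝ :=
    fun i j x => p i * p j * f i x * f j x / mixture p f x with hGdef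
  have hGmeas : ∀ i j, Measurable (G i j) := fun i j =>
    ((((hfmeas i).const_mul (p i * p j)).mul (hfmeas j)).div hmixMeas)
  have hGnn : ∀ i j x, 0 ≤ G i j x := fun i j x =>
    div_nonneg (by
      have := hfnn i x; have := hfnn j x; have := (hp i).le; have := (hp j).le
      positivity) (hmixnn x)
  have hGle : ∀ i j x, G i j x ≤ p i * f i x := by
    intro i j x
    rcases eq_or_lt_of_le (hmixnn x) with h0 | hpos
    · show p i * p j * f i x * f j x / mixture p f x ≤ p i * f i x
      rw [← h0, div_zero]
      exact hann i x
    · show p i * p j * f i x * f j x / mixture p f x ≤ p i * f i x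
      rw [div_le_iff₀ hpos]
      have h1 := ha_le_mix j x
      have h2 := hann i x
      nlinarith [hann j x]
  have hGInt : ∀ i j, Integrable (G i j) := by
    intro i j
    apply (haInt i).mono (hGmeas i j).aestronglyMeasurable
    filter_upwards with x
    rw [Real.norm_eq_abs, Real.norm_eq_abs, abs_of_nonneg (hGnn i j x),
      abs_of_nonneg (hann i x)]
    exact hGle i j x
  -- sum of GHP integrands
  set H : (Fin d → ℝ) → ℝ := fun x => ∑ i, ∑ j, if i < j then G i j x else 0 with hHdef
  have hHsummandInt : ∀ i j : Fin m,
      Integrable (fun x : Fin d → ℝ => if i < j then G i j x else 0) := by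
    intro i j
    by_cases h : i < j
    · simp only [if_pos h]; exact hGInt i j
    · simp only [if_neg h]; exact integrable_zero _ _ _
  have hHInt : Integrable H := by
    rw [hHdef]
    apply integrable_finset_sum
    intro i _
    exact integrable_finset_sum _ fun j _ => hHsummandInt i j
  have hHval : ∫ x : Fin d → ℝ, 2 * H x
      = 2 * ∑ i : Fin m, ∑ j : Fin m, (if i < j then deltaGHP p f i j else 0) := by
    rw [integral_const_mul]
    congr 1
    rw [hHdef, integral_finset_sum _ fun i _ => integrable_finset_sum _ fun j _ => hHsummandInt i j]
    apply Finset.sum_congr rfl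
    intro i _
    rw [integral_finset_sum _ fun j _ => hHsummandInt i j]
    apply Finset.sum_congr rfl
    intro j _
    by_cases h : i < j
    · simp only [if_pos h]
      rfl
    · simp only [if_neg h]
      exact integral_zero _ _
  -- pointwise rewriting of H
  have hHrw : ∀ x : Fin d → ℝ, H x = ∑ i, ∑ j,
      (if i < j then (p i * f i x) * (p j * f j x) / (∑ k, p k * f k x) else 0) := by
    intro x
    rw [hHdef]
    apply Finset.sum_congr rfl; intro i _
    apply Finset.sum_congr rfl; intro j _
    by_cases h : i < j
    · simp only [if_pos h, hGdef, hmixeq]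
      congr 1
      ring
    · simp only [if_neg h]
  constructor
  · -- Part 1
    rw [bayesError, ← hmixint1, ← hHval, ← integral_sub hmixInt hgInt]
    apply integral_mono (hmixInt.sub hgInt) (hHInt.const_mul 2)
    intro x
    have hpt := pointwise_GHP hm0 (fun k => p k * f k x) (fun k => hann k x)
    simp only [Pi.sub_apply]
    calc mixture p f x - g x ≤ 2 * ∑ i, ∑ j,
          (if i < j then (p i * f i x) * (p j * f j x) / (∑ k, p k * f k x) else 0) := hpt
      _ = 2 * H x := by rw [hHrw x]
  · -- Part 2
    -- JS integrand
    set q : (Fin d → ℝ) → ℝ :=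
      fun x => ∑ k, p k * f k x * Real.logb 2 (p k * f k x / mixture p f x) with hqdef
    have hqMeas : Measurable q := by
      rw [hqdef]
      apply Finset.measurable_sum
      intro k _
      apply (haMeas k).mul
      have : (fun x => Real.logb 2 (p k * f k x / mixture p f x))
          = fun x => Real.log (p k * f k x / mixture p f x) / Real.log 2 := rfl
      rw [this]
      exact (Real.measurable_log.comp ((haMeas k).div hmixMeas)).div_const _
    have hqBound : ∀ x, ‖q x‖ ≤ ‖(m / Real.log 2) * mixture p f x‖ := by
      intro x
      rw [Real.norm_eq_abs, Real.norm_eq_abs]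
      have h1 : |q x| ≤ ∑ k : Fin m, |p k * f k x * Real.logb 2 (p k * f k x / mixture p f x)| :=
        Finset.abs_sum_le_sum_abs _ _
      have h2 : ∀ k : Fin m, |p k * f k x * Real.logb 2 (p k * f k x / mixture p f x)|
          ≤ mixture p f x / Real.log 2 := fun k => term_bound (hann k x) (ha_le_mix k x)
      have h3 : |q x| ≤ m * (mixture p f x / Real.log 2) := by
        calc |q x| ≤ ∑ k : Fin m, |p k * f k x * Real.logb 2 (p k * f k x / mixture p f x)| := h1
          _ ≤ ∑ _k : Fin m, mixture p f x / Real.log 2 := Finset.sum_le_sum fun k _ => h2 k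
          _ = m * (mixture p f x / Real.log 2) := by
              rw [Finset.sum_const, Finset.card_univ, Fintype.card_fin, nsmul_eq_mul]
      have hnn : (0:ℝ) ≤ (m : ℝ) / Real.log 2 * mixture p f x :=
        mul_nonneg (div_nonneg (Nat.cast_nonneg m) hL.le) (hmixnn x)
      rw [abs_of_nonneg hnn]
      calc |q x| ≤ m * (mixture p f x / Real.log 2) := h3
        _ = m / Real.log 2 * mixture p f x := by ring
    have hqInt : Integrable q := by
      apply (hmixInt.const_mul (m / Real.log 2)).mono hqMeas.aestronglyMeasurable
      filter_upwards with x
      exact hqBound x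
    have hqval : epsJS p f = ∫ x : Fin d → ℝ, -(1/2) * q x := by
      rw [epsJS, integral_const_mul]
    rw [← hHval, hqval]
    apply integral_mono (hHInt.const_mul 2) (hqInt.const_mul _)
    intro x
    have hpt := pointwise_JS hm0 (fun k => p k * f k x) (fun k => hann k x)
    simp only []
    calc 2 * H x = 2 * ∑ i, ∑ j,
          (if i < j then (p i * f i x) * (p j * f j x) / (∑ k, p k * f k x) else 0) := by
            rw [hHrw x]
      _ ≤ -(1/2) * ∑ k, (p k * f k x) * Real.logb 2 ((p k * f k x) / (∑ k, p k * f k x)) := hpt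
      _ = -(1/2) * q x := by rw [hqdef, hmixeq]
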